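/- Let H₁,…,H_{n−1} be C² functions on an open set Ω ⊆ ℝⁿ, write ℋ = (H₁,…,H_{n−1})ᵀ, Γ = det(∂₁ℋ,…,∂_{n−1}ℋ) and Γᵢ = det(∂₁ℋ,…,∂_{i−1}ℋ, ∂ₙℋ, ∂_{i+1}ℋ,…,∂_{n−1}ℋ). Then the determinant identity ∂ₙΓ − ∂₁Γ₁ − … − ∂_{n−1}Γ_{n−1} = 0 holds on Ω. -/

import Mathlib

open Finset in
private theorem det_bound {m : ℕ} (v : Fin (m + 1) → Fin (m + 1) → ℝ) :
    ‖(Matrix.detRowAlternating : ((Fin (m+1) → ℝ) [⋀^Fin (m+1)]→ₗ[ℝ] ℝ)).toMultilinearMap v‖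
      ≤ ((Nat.factorial (m+1) : ℕ) : ℝ) * ∏ i, ‖v i‖ := by
  have h1 : (Matrix.detRowAlternating : ((Fin (m+1) → ℝ) [⋀^Fin (m+1)]→ₗ[ℝ] ℝ)).toMultilinearMap v
      = (Matrix.of v).det := rfl
  rw [h1, Matrix.det_apply]
  calc ‖∑ σ : Equiv.Perm (Fin (m+1)), Equiv.Perm.sign σ • ∏ i, Matrix.of v (σ i) i‖
      ≤ ∑ σ : Equiv.Perm (Fin (m+1)), ‖Equiv.Perm.sign σ • ∏ i, Matrix.of v (σ i) i‖ :=
        norm_sum_le _ _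
    _ ≤ ∑ _σ : Equiv.Perm (Fin (m+1)), ∏ i, ‖v i‖ := by
        refine Finset.sum_le_sum fun σ _ => ?_
        have h2 : ‖Equiv.Perm.sign σ • ∏ i, Matrix.of v (σ i) i‖ = ‖∏ i, v (σ i) i‖ := by
          rcases Int.units_eq_one_or (Equiv.Perm.sign σ) with h | h <;>
            simp [h, Units.smul_def, norm_neg]
        rw [h2]
        calc ‖∏ i, v (σ i) i‖ = ∏ i, ‖v (σ i) i‖ := norm_prod _ _
          _ ≤ ∏ i, ‖v (σ i)‖ := Finset.prod_le_prod (fun i _ => norm_nonneg _)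
              (fun i _ => norm_le_pi_norm _ _)
          _ = ∏ i, ‖v i‖ := Equiv.prod_comp σ (fun i => ‖v i‖)
    _ = ((Nat.factorial (m+1) : ℕ) : ℝ) * ∏ i, ‖v i‖ := by
        rw [Finset.sum_const, Finset.card_univ, Fintype.card_perm, Fintype.card_fin, nsmul_eq_mul]

/-- The determinant, as a continuous multilinear map in the rows. -/
noncomputable def detCM (m : ℕ) :
    ContinuousMultilinearMap ℝ (fun _ : Fin (m + 1) => Fin (m + 1) → ℝ) ℝ :=
  MultilinearMap.mkContinuous
    (Matrix.detRowAlternating : ((Fin (m+1) → ℝ) [⋀^Fin (m+1)]→ₗ[ℝ] ℝ)).toMultilinearMap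
    ((Nat.factorial (m+1) : ℕ) : ℝ) det_bound

theorem detCM_apply {m : ℕ} (v : Fin (m + 1) → Fin (m + 1) → ℝ) :
    detCM m v = (Matrix.of v).det := by
  have h : detCM m v = Matrix.detRowAlternating v := by
    simp [detCM, MultilinearMap.coe_mkContinuous]
  rw [h]; rfl

theorem detCM_swap {m : ℕ} (v : Fin (m + 1) → Fin (m + 1) → ℝ) {i j : Fin (m + 1)}
    (hij : i ≠ j) : detCM m (v ∘ Equiv.swap i j) = - detCM m v :=
  by rw [show (detCM m) (v ∘ Equiv.swap i j) = Matrix.detRowAlternating (v ∘ Equiv.swap i j) by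
        simp [detCM, MultilinearMap.coe_mkContinuous],
      show (detCM m) v = Matrix.detRowAlternating v by simp [detCM, MultilinearMap.coe_mkContinuous]]
     exact Matrix.detRowAlternating.map_swap v hij





/-- Partial derivative of a function on `ℝⁿ` in the `i`-th coordinate direction. -/
noncomputable def pd {n : ℕ} (i : Fin n) (f : (Fin n → ℝ) → ℝ) (x : Fin n → ℝ) : ℝ :=
  fderiv ℝ f x (Pi.single i 1)

/-- The matrix `(∂₁ℋ, …, ∂_{n-1}ℋ)` whose columns are the partial derivatives of
`ℋ = (H₁,…,H_{n-1})` with respect to the first `n - 1` variables. -/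
noncomputable def gradMat {m : ℕ} (H : Fin (m + 1) → (Fin (m + 2) → ℝ) → ℝ)
    (x : Fin (m + 2) → ℝ) : Matrix (Fin (m + 1)) (Fin (m + 1)) ℝ :=
  Matrix.of fun k j => pd (Fin.castSucc j) (H k) x

/-- `Γ = det(∂₁ℋ,…,∂_{n-1}ℋ)` as a function of `x`. -/
noncomputable def Gamma {m : ℕ} (H : Fin (m + 1) → (Fin (m + 2) → ℝ) → ℝ)
    (x : Fin (m + 2) → ℝ) : ℝ := (gradMat H x).det

/-- `Γᵢ`, with the `i`-th column replaced by `∂ₙℋ`, as a function of `x`. -/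
noncomputable def GammaI {m : ℕ} (H : Fin (m + 1) → (Fin (m + 2) → ℝ) → ℝ)
    (i : Fin (m + 1)) (x : Fin (m + 2) → ℝ) : ℝ :=
  ((gradMat H x).updateCol i (fun k => pd (Fin.last (m + 1)) (H k) x)).det

theorem detCM_eq {m : ℕ} (v : Fin (m + 1) → Fin (m + 1) → ℝ) :
    detCM m v = Matrix.detRowAlternating v := by
  simp [detCM, MultilinearMap.coe_mkContinuous]

/-- The family of column vectors `j ↦ ∂_{σ j} ℋ` at `y`. -/
noncomputable def pdVec {m : ℕ} (H : Fin (m + 1) → (Fin (m + 2) → ℝ) → ℝ)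
    (σ : Fin (m + 1) → Fin (m + 2)) (y : Fin (m + 2) → ℝ) : Fin (m + 1) → Fin (m + 1) → ℝ :=
  fun j k => fderiv ℝ (H k) y (Pi.single (σ j) 1)

/-- For `C²` functions `H₁,…,H_{n-1}` on an open set `Ω ⊆ ℝⁿ`
(here `n = m + 2`), the determinant identity `∂ₙΓ - ∂₁Γ₁ - … - ∂_{n-1}Γ_{n-1} = 0`
holds on `Ω`. -/
theorem determinant_identity {m : ℕ}
    (H : Fin (m + 1) → (Fin (m + 2) → ℝ) → ℝ)
    (Ω : Set (Fin (m + 2) → ℝ)) (hΩ : IsOpen Ω)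
    (hH : ∀ k, ContDiffOn ℝ 2 (H k) Ω) :
    ∀ x ∈ Ω,
      pd (Fin.last (m + 1)) (Gamma H) x - ∑ i, pd i.castSucc (GammaI H i) x = 0 := by
  classical
  intro x hx
  have hmem : Ω ∈ nhds x := hΩ.mem_nhds hx
  set f'' : Fin (m + 1) → (Fin (m + 2) → ℝ) →L[ℝ] (Fin (m + 2) → ℝ) →L[ℝ] ℝ :=
    fun k => fderiv ℝ (fderiv ℝ (H k)) x with hf''def
  have hC2 : ∀ k, ContDiffAt ℝ 2 (H k) x := fun k => (hH k).contDiffAt hmem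
  have hd1 : ∀ k, ContDiffAt ℝ 1 (fderiv ℝ (H k)) x := fun k => (hC2 k).fderiv_right (by norm_num)
  have hf'' : ∀ k, HasFDerivAt (fderiv ℝ (H k)) (f'' k) x := fun k =>
    ((hd1 k).differentiableAt one_ne_zero).hasFDerivAt
  have hev : ∀ k, ∀ᶠ y in nhds x, HasFDerivAt (H k) (fderiv ℝ (H k) y) y := by
    intro k
    filter_upwards [hmem] with y hy
    exact (((hH k).differentiableOn two_ne_zero).differentiableAt (hΩ.mem_nhds hy)).hasFDerivAt
  set A : Fin (m + 2) → Fin (m + 2) → (Fin (m + 1) → ℝ) :=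
    fun a b k => f'' k (Pi.single a 1) (Pi.single b 1) with hA
  have hAsymm : ∀ a b, A a b = A b a := fun a b => funext fun k =>
    second_derivative_symmetric_of_eventually (hev k) (hf'' k) _ _
  -- key directional-derivative computation
  have key : ∀ (σ : Fin (m + 1) → Fin (m + 2)) (a : Fin (m + 2)),
      pd a (fun y => detCM m (pdVec H σ y)) x
        = ∑ j, detCM m (Function.update (pdVec H σ x) j (A a (σ j))) := by
    intro σ a
    set g' : Fin (m + 1) → (Fin (m + 2) → ℝ) →L[ℝ] (Fin (m + 1) → ℝ) :=
      fun j => ContinuousLinearMap.pi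
        (fun k => (ContinuousLinearMap.apply ℝ ℝ (Pi.single (σ j) 1)).comp (f'' k)) with hg'
    have hg : ∀ j, HasFDerivAt (fun y k => fderiv ℝ (H k) y (Pi.single (σ j) 1)) (g' j) x := by
      intro j
      apply hasFDerivAt_pi.2
      intro k
      exact (ContinuousLinearMap.apply ℝ ℝ (Pi.single (σ j) 1)).hasFDerivAt.comp x (hf'' k)
    have hG : HasFDerivAt (fun y => detCM m (pdVec H σ y))
        (∑ j, ((detCM m).toContinuousLinearMap (pdVec H σ x) j).comp (g' j)) x :=
      HasFDerivAt.multilinear_comp (detCM m) hg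
    show fderiv ℝ (fun y => detCM m (pdVec H σ y)) x (Pi.single a 1) = _
    rw [hG.fderiv]
    simp only [ContinuousLinearMap.sum_apply, ContinuousLinearMap.coe_comp', Function.comp_apply]
    refine Finset.sum_congr rfl fun j _ => ?_
    simp only [ContinuousMultilinearMap.toContinuousLinearMap_apply]
    congr 1
  -- identification of Gamma and GammaI with detCM compositions
  have hGa : Gamma H = fun y => detCM m (pdVec H (fun j => j.castSucc) y) := by
    funext y
    rw [Gamma, ← Matrix.det_transpose, detCM_apply]
    rfl
  set τ : Fin (m + 1) → Fin (m + 1) → Fin (m + 2) :=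
    fun i j => if j = i then Fin.last (m + 1) else j.castSucc with hτ
  have hGi : ∀ i, GammaI H i = fun y => detCM m (pdVec H (τ i) y) := by
    intro i; funext y
    rw [GammaI, ← Matrix.det_transpose, ← Matrix.updateRow_transpose, detCM_apply]
    congr 1
    funext j k
    rcases eq_or_ne j i with rfl | hji
    · rw [Matrix.updateRow_self]
      show pd (Fin.last (m + 1)) (H k) y = fderiv ℝ (H k) y (Pi.single (τ j j) 1)
      rw [show τ j j = Fin.last (m + 1) by simp [hτ]]
      rfl
    · rw [Matrix.updateRow_ne hji]
      show pd j.castSucc (H k) y = fderiv ℝ (H k) y (Pi.single (τ i j) 1)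
      rw [show τ i j = j.castSucc by simp [hτ, hji]]
      rfl
  -- abbreviations
  set vx : Fin (m + 1) → Fin (m + 1) → ℝ := pdVec H (fun j => j.castSucc) x with hvx
  set c : Fin (m + 1) → ℝ := fun k => fderiv ℝ (H k) x (Pi.single (Fin.last (m + 1)) 1) with hc
  have hvτ : ∀ i, pdVec H (τ i) x = Function.update vx i c := by
    intro i; funext j k
    rcases eq_or_ne j i with rfl | hji
    · rw [Function.update_self]
      show fderiv ℝ (H k) x (Pi.single (τ j j) 1) = c k
      rw [show τ j j = Fin.last (m + 1) by simp [hτ]]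
    · rw [Function.update_of_ne hji]
      show fderiv ℝ (H k) x (Pi.single (τ i j) 1) = vx j k
      rw [show τ i j = j.castSucc by simp [hτ, hji]]
      rfl
  -- rewrite both pd terms via key
  rw [hGa, key]
  have hterm : ∀ i : Fin (m + 1), pd i.castSucc (GammaI H i) x
      = detCM m (Function.update vx i (A (Fin.last (m + 1)) i.castSucc))
        + ∑ j ∈ Finset.univ.erase i,
            detCM m (Function.update (Function.update vx i c) j (A i.castSucc j.castSucc)) := by
    intro i
    rw [hGi i, key (τ i) i.castSucc]
    rw [← Finset.add_sum_erase _ _ (Finset.mem_univ i)]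
    congr 1
    · rw [hvτ, Function.update_idem]
      congr 1
      rw [show τ i i = Fin.last (m + 1) from if_pos rfl, hAsymm]
    · refine Finset.sum_congr rfl fun j hj => ?_
      rw [hvτ, show τ i j = j.castSucc from if_neg (Finset.ne_of_mem_erase hj)]
  simp only [hterm, Finset.sum_add_distrib]
  -- the first sums cancel; the remaining double sum vanishes by antisymmetry
  have hFanti : ∀ i j : Fin (m + 1), i ≠ j →
      detCM m (Function.update (Function.update vx j c) i (A j.castSucc i.castSucc))
        = - detCM m (Function.update (Function.update vx i c) j (A i.castSucc j.castSucc)) := by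
    intro i j hij
    have harr : Function.update (Function.update vx j c) i (A j.castSucc i.castSucc)
        = (Function.update (Function.update vx i c) j (A i.castSucc j.castSucc))
            ∘ Equiv.swap i j := by
      funext t
      simp only [Function.comp_apply]
      rcases eq_or_ne t i with rfl | hti
      · rw [Equiv.swap_apply_left, Function.update_self, Function.update_self]
        exact hAsymm _ _
      · rcases eq_or_ne t j with rfl | htj
        · rw [Equiv.swap_apply_right, Function.update_of_ne hij.symm, Function.update_self,
            Function.update_of_ne hij, Function.update_self]
        · rw [Equiv.swap_apply_of_ne_of_ne hti htj]
          simp [Function.update_of_ne hti, Function.update_of_ne htj]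
    rw [harr, detCM_swap _ hij]
  have hS : ∑ i, ∑ j ∈ Finset.univ.erase i,
      detCM m (Function.update (Function.update vx i c) j (A i.castSucc j.castSucc)) = 0 := by
    set F : Fin (m + 1) → Fin (m + 1) → ℝ := fun i j =>
      detCM m (Function.update (Function.update vx i c) j (A i.castSucc j.castSucc)) with hF
    have hcomm : ∑ i, ∑ j ∈ Finset.univ.erase i, F i j
        = ∑ j, ∑ i ∈ Finset.univ.erase j, F i j := by
      refine Finset.sum_comm' ?_
      intro a b
      simp [Finset.mem_erase, and_comm, ne_comm, eq_comm]
    have hneg : ∑ j, ∑ i ∈ Finset.univ.erase j, F i j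
        = - ∑ j, ∑ i ∈ Finset.univ.erase j, F j i := by
      rw [← Finset.sum_neg_distrib]
      refine Finset.sum_congr rfl fun j _ => ?_
      rw [← Finset.sum_neg_distrib]
      refine Finset.sum_congr rfl fun i hi => ?_
      simp only [hF]
      exact hFanti j i (Finset.ne_of_mem_erase hi).symm
    have h2 := hcomm.trans hneg
    linarith [h2]
  rw [hS]
  ring
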